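/- Assume the degree identity deg(δ_N^{d(n-1)-1}) = (-1)^{d(n-1)-1} in the Chow ring A_{d,n} of T_{d,n}, and the pullback identity π*(δ_{N,n}) = δ_{N,n+1} + δ_{N⁺,n+1} for the point-dropping map π : T_{d,n+1} → T_{d,n}, together with π_*(δ_{N,n+1}^d) = [T_{d,n}] and δ_{N⁺,n+1}^d · δ_{N,n+1} = 0 and π_*(δ_{N,n+1}^i) = 0 for i < d. Then ∫ δ_{N⁺,n+1}^{dn-1} = (-1)^d ∫ δ_{N,n}^{d(n-1)-1}. -/
import Mathlib


/-- The induction step for the top self-intersection of `δ_N` (Lemma `induction_step`):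
Let `A` be the Chow ring of `T_{d,n+1}`, `B` that of `T_{d,n}`, `pb = π^*` the pullback
along the point-dropping map `π : T_{d,n+1} → T_{d,n}` and `pf = π_*` the pushforward,
satisfying the projection formula, with degree maps compatible with pushforward.
Assume `deg_B(δ_{N,n}^{d(n-1)-1}) = (-1)^{d(n-1)-1}`, the pullback identity
`π^*(δ_{N,n}) = δ_{N,n+1} + δ_{N⁺,n+1}`, `π_*(δ_{N,n+1}^d) = 1`,
`π_*(δ_{N,n+1}^i) = 0` for `i < d`, and `δ_{N⁺,n+1}^d · δ_{N,n+1} = 0`.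
Then `∫ δ_{N⁺,n+1}^{dn-1} = (-1)^d ∫ δ_{N,n}^{d(n-1)-1}`. -/
theorem induction_step (d n : ℕ) (hd : 1 ≤ d) (hn : 2 ≤ n)
    {A B : Type*} [CommRing A] [CommRing B]
    (pb : B →+* A) (pf : A →+ B)
    (proj_formula : ∀ (b : B) (a : A), pf (pb b * a) = b * pf a)
    (degA : A →+ ℤ) (degB : B →+ ℤ)
    (hcompat : ∀ a : A, degA a = degB (pf a))
    (δB δA δAp : A) (δNn : B)
    -- `δA = δ_{N,n+1}`, `δAp = δ_{N⁺,n+1}`, `δNn = δ_{N,n}`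
    (hδB : δB = pb δNn)
    (hpull : pb δNn = δA + δAp)
    (hpf_top : pf (δA ^ d) = 1)
    (hpf_low : ∀ i < d, pf (δA ^ i) = 0)
    (hvanish : δAp ^ d * δA = 0)
    (hdegB : degB (δNn ^ (d * (n - 1) - 1)) = (-1 : ℤ) ^ (d * (n - 1) - 1)) :
    degA (δAp ^ (d * n - 1)) = (-1 : ℤ) ^ d * degB (δNn ^ (d * (n - 1) - 1)) := by
  set m := d * (n - 1) - 1 with hm
  have hn1 : n - 1 + 1 = n := by omega
  have key : d * (n - 1) + d = d * n := by
    cases n with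
    | zero => omega
    | succ k => simp [Nat.mul_succ]
  have hpos : 0 < d * (n - 1) := Nat.mul_pos (by omega) (by omega)
  have hsplit : d * n - 1 = d + m := by omega
  have hAp : δAp = pb δNn - δA := by rw [hpull]; ring
  -- Step 1: all mixed terms vanish
  have step1 : δAp ^ (d * n - 1) = pb (δNn ^ m) * δAp ^ d := by
    have hE : δAp ^ m = (pb δNn - δA) ^ m := by rw [← hAp]
    rw [hsplit, pow_add, hE, sub_pow, Finset.mul_sum,
      Finset.sum_eq_single m]
    · have h1 : ((-1 : A)) ^ (m + m) = 1 := by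
        rw [← two_mul, pow_mul]; simp
      simp [h1, map_pow, mul_comm]
    · intro k hk hkm
      have h1 : δA ^ (m - k) = δA ^ (m - k - 1) * δA := by
        rw [← pow_succ]
        congr 1
        rw [Finset.mem_range] at hk
        omega
      calc δAp ^ d * ((-1) ^ (k + m) * pb δNn ^ k * δA ^ (m - k) * (m.choose k : A))
          = (δAp ^ d * δA) *
            ((-1) ^ (k + m) * pb δNn ^ k * δA ^ (m - k - 1) * (m.choose k : A)) := by
            rw [h1]; ring
        _ = 0 := by rw [hvanish, zero_mul]
    · intro h
      exact absurd (Finset.self_mem_range_succ m) h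
  -- Step 2: pushforward of δAp ^ d
  have step3 : pf (δAp ^ d) = (-1 : B) ^ d := by
    rw [hAp, sub_pow, map_sum, Finset.sum_eq_single 0]
    · have h0 : (-1 : A) ^ (0 + d) * pb δNn ^ 0 * δA ^ (d - 0) * (d.choose 0 : A)
          = pb ((-1 : B) ^ d) * δA ^ d := by
        simp
      rw [h0, proj_formula, hpf_top, mul_one]
    · intro k hk hk0
      have hkd : k ≤ d := by rw [Finset.mem_range] at hk; omega
      have h1 : (-1 : A) ^ (k + d) * pb δNn ^ k * δA ^ (d - k) * (d.choose k : A)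
          = pb ((-1) ^ (k + d) * δNn ^ k * (d.choose k : B)) * δA ^ (d - k) := by
        simp only [map_mul, map_pow, map_natCast, map_neg, map_one]
        ring
      rw [h1, proj_formula, hpf_low (d - k) (by omega), mul_zero]
    · intro h
      exact absurd (Finset.mem_range.mpr (by omega)) h
  rw [hcompat, step1, proj_formula, step3]
  have h2 : δNn ^ m * (-1 : B) ^ d = ((-1 : ℤ) ^ d) • (δNn ^ m) := by
    rw [zsmul_eq_mul]
    push_cast
    ring
  rw [h2, map_zsmul, smul_eq_mul]
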